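/- For every complex Lie algebra 𝔤, every fixed s ∈ ℂ, and all e₁, e₁' ∈ ℂ with e₁, e₁' ≠ 0, the Lie algebras Ḡ^(e₁, s·e₁) and Ḡ^(e₁', s·e₁') are isomorphic; that is, the family of current algebras over the line D_s = {e₂ = s·e₁} is a jump deformation. -/

import Mathlib

open scoped Classical

/-- The bracket of the genus-one current algebra family
`Ḡ^(e₁,e₂) = 𝔤 ⊗ A^(e₁,e₂)`, where the tensor product of `𝔤` with the
ℂ-vector space with basis `{Aₙ}_{n∈ℤ}` is modeled as `ℤ →₀ 𝔤`, the pure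
tensor `x ⊗ Aₙ` corresponding to `Finsupp.single n x`.  The bracket is the
bilinear extension of:
`[x ⊗ Aₙ, y ⊗ Aₘ] = [x,y] ⊗ Aₙ₊ₘ` if `n` or `m` is even, and
`[x ⊗ Aₙ, y ⊗ Aₘ] = [x,y] ⊗ (Aₙ₊ₘ + 3e₁Aₙ₊ₘ₋₂ + (e₁−e₂)(2e₁+e₂)Aₙ₊ₘ₋₄)`
if both `n` and `m` are odd. -/
noncomputable def Gbr (𝔤 : Type*) [LieRing 𝔤] [LieAlgebra ℂ 𝔤]
    (e₁ e₂ : ℂ) (f g : ℤ →₀ 𝔤) : ℤ →₀ 𝔤 :=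
  f.sum fun n x => g.sum fun m y =>
    if Odd n ∧ Odd m then
      Finsupp.single (n + m) ⁅x, y⁆ + (3 * e₁) • Finsupp.single (n + m - 2) ⁅x, y⁆
        + ((e₁ - e₂) * (2 * e₁ + e₂)) • Finsupp.single (n + m - 4) ⁅x, y⁆
    else Finsupp.single (n + m) ⁅x, y⁆

section Aux

variable (𝔤 : Type*) [LieRing 𝔤] [LieAlgebra ℂ 𝔤]

/-- The structure-constant part of `Gbr`. -/
noncomputable def Fc (e₁ e₂ : ℂ) (n m : ℤ) (z : 𝔤) : ℤ →₀ 𝔤 :=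
  if Odd n ∧ Odd m then
    Finsupp.single (n + m) z + (3 * e₁) • Finsupp.single (n + m - 2) z
      + ((e₁ - e₂) * (2 * e₁ + e₂)) • Finsupp.single (n + m - 4) z
  else Finsupp.single (n + m) z

lemma Gbr_eq (e₁ e₂ : ℂ) (f g : ℤ →₀ 𝔤) :
    Gbr 𝔤 e₁ e₂ f g = f.sum fun n x => g.sum fun m y => Fc 𝔤 e₁ e₂ n m ⁅x, y⁆ := rfl

variable {𝔤}

lemma Fc_zero (e₁ e₂ : ℂ) (n m : ℤ) : Fc 𝔤 e₁ e₂ n m 0 = 0 := by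
  unfold Fc; split <;> simp

lemma Fc_add (e₁ e₂ : ℂ) (n m : ℤ) (z w : 𝔤) :
    Fc 𝔤 e₁ e₂ n m (z + w) = Fc 𝔤 e₁ e₂ n m z + Fc 𝔤 e₁ e₂ n m w := by
  unfold Fc; split <;> simp [Finsupp.single_add, smul_add] <;> abel

lemma Fc_smul (e₁ e₂ : ℂ) (n m : ℤ) (a : ℂ) (z : 𝔤) :
    Fc 𝔤 e₁ e₂ n m (a • z) = a • Fc 𝔤 e₁ e₂ n m z := by
  unfold Fc; split <;> simp [Finsupp.smul_single, smul_add, smul_comm a]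

lemma Gbr_zero_left (e₁ e₂ : ℂ) (g : ℤ →₀ 𝔤) : Gbr 𝔤 e₁ e₂ 0 g = 0 := by
  simp [Gbr_eq]

lemma Gbr_zero_right (e₁ e₂ : ℂ) (f : ℤ →₀ 𝔤) : Gbr 𝔤 e₁ e₂ f 0 = 0 := by
  simp [Gbr_eq]

lemma Gbr_add_left (e₁ e₂ : ℂ) (f f' g : ℤ →₀ 𝔤) :
    Gbr 𝔤 e₁ e₂ (f + f') g = Gbr 𝔤 e₁ e₂ f g + Gbr 𝔤 e₁ e₂ f' g := by
  rw [Gbr_eq, Gbr_eq, Gbr_eq]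
  refine Finsupp.sum_add_index ?_ ?_
  · intro n _
    simp [Fc_zero]
  · intro n _ x x'
    rw [← Finsupp.sum_add]
    exact Finsupp.sum_congr fun m _ => by rw [add_lie, Fc_add]

lemma Gbr_add_right (e₁ e₂ : ℂ) (f g g' : ℤ →₀ 𝔤) :
    Gbr 𝔤 e₁ e₂ f (g + g') = Gbr 𝔤 e₁ e₂ f g + Gbr 𝔤 e₁ e₂ f g' := by
  rw [Gbr_eq, Gbr_eq, Gbr_eq, ← Finsupp.sum_add]
  refine Finsupp.sum_congr fun n _ => ?_
  refine Finsupp.sum_add_index ?_ ?_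
  · intro m _
    simp [Fc_zero]
  · intro m _ y y'
    rw [lie_add, Fc_add]

lemma Gbr_single_single (e₁ e₂ : ℂ) (n m : ℤ) (x y : 𝔤) :
    Gbr 𝔤 e₁ e₂ (Finsupp.single n x) (Finsupp.single m y) = Fc 𝔤 e₁ e₂ n m ⁅x, y⁆ := by
  rw [Gbr_eq, Finsupp.sum_single_index, Finsupp.sum_single_index]
  · simp [Fc_zero]
  · rw [Finsupp.sum_single_index] <;> simp [Fc_zero]

variable (𝔤)

/-- The diagonal rescaling `Aₙ ↦ cⁿ Aₙ`. -/
noncomputable def Tsc (c : ℂ) : (ℤ →₀ 𝔤) →ₗ[ℂ] (ℤ →₀ 𝔤) :=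
  Finsupp.lsum ℂ fun n => c ^ n • Finsupp.lsingle n

variable {𝔤}

lemma Tsc_single (c : ℂ) (n : ℤ) (x : 𝔤) :
    Tsc 𝔤 c (Finsupp.single n x) = c ^ n • Finsupp.single n x := by
  simp [Tsc, Finsupp.smul_single]

lemma Tsc_key {c e₁ e₂ e₁' e₂' : ℂ} (hc0 : c ≠ 0)
    (h2 : e₁ = c ^ (2 : ℤ) * e₁')
    (h4 : (e₁ - e₂) * (2 * e₁ + e₂) = c ^ (4 : ℤ) * ((e₁' - e₂') * (2 * e₁' + e₂')))
    (n m : ℤ) (z : 𝔤) :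
    Tsc 𝔤 c (Fc 𝔤 e₁ e₂ n m z) = (c ^ n * c ^ m) • Fc 𝔤 e₁' e₂' n m z := by
  have hnm : c ^ (n + m) = c ^ n * c ^ m := zpow_add₀ hc0 n m
  have h2' : c ^ (n + m - 2) * c ^ (2 : ℤ) = c ^ (n + m) := by
    rw [← zpow_add₀ hc0]; ring_nf
  have h4' : c ^ (n + m - 4) * c ^ (4 : ℤ) = c ^ (n + m) := by
    rw [← zpow_add₀ hc0]; ring_nf
  unfold Fc; split
  · rw [map_add, map_add, map_smul, map_smul, Tsc_single, Tsc_single, Tsc_single,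
      smul_add, smul_add, smul_smul, smul_smul, smul_smul, smul_smul]
    have hs2 : 3 * e₁ * c ^ (n + m - 2) = c ^ n * c ^ m * (3 * e₁') := by
      rw [h2]; linear_combination 3 * e₁' * h2' + 3 * e₁' * hnm
    have hs4 : (e₁ - e₂) * (2 * e₁ + e₂) * c ^ (n + m - 4)
        = c ^ n * c ^ m * ((e₁' - e₂') * (2 * e₁' + e₂')) := by
      rw [h4]; linear_combination (e₁' - e₂') * (2 * e₁' + e₂') * h4'
        + (e₁' - e₂') * (2 * e₁' + e₂') * hnm
    rw [hnm, hs2, hs4]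
  · rw [Tsc_single, hnm]

end Aux

/-- For every complex Lie algebra `𝔤`, every fixed `s ∈ ℂ`,
and all `e₁, e₁' ∈ ℂ` with `e₁, e₁' ≠ 0`, the Lie algebras `Ḡ^(e₁, s·e₁)`
and `Ḡ^(e₁', s·e₁')` are isomorphic; that is, the family of current algebras
over the line `D_s = {e₂ = s·e₁}` is a jump deformation. -/
theorem G_jump_deformation_on_Ds (𝔤 : Type) [LieRing 𝔤] [LieAlgebra ℂ 𝔤]
    (s : ℂ) (e₁ e₁' : ℂ) (he : e₁ ≠ 0) (he' : e₁' ≠ 0) :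
    ∃ φ : (ℤ →₀ 𝔤) ≃ₗ[ℂ] (ℤ →₀ 𝔤),
      ∀ f g : ℤ →₀ 𝔤,
        φ (Gbr 𝔤 e₁ (s * e₁) f g) = Gbr 𝔤 e₁' (s * e₁') (φ f) (φ g) := by
  obtain ⟨c, hc⟩ := IsAlgClosed.exists_pow_nat_eq (k := ℂ) (e₁ / e₁') two_pos
  have hc0 : c ≠ 0 := by
    intro h; rw [h] at hc; simp at hc
    exact absurd (div_eq_zero_iff.mp hc.symm) (by tauto)
  have hz2 : c ^ (2 : ℤ) = e₁ / e₁' := by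
    rw [show (2 : ℤ) = ((2 : ℕ) : ℤ) from rfl, zpow_natCast, hc]
  have h2 : e₁ = c ^ (2 : ℤ) * e₁' := by
    rw [hz2, div_mul_cancel₀ _ he']
  have hz4 : c ^ (4 : ℤ) = (e₁ / e₁') ^ 2 := by
    rw [← hz2, show (4 : ℤ) = 2 + 2 from rfl, zpow_add₀ hc0]; ring
  have h4 : (e₁ - s * e₁) * (2 * e₁ + s * e₁)
      = c ^ (4 : ℤ) * ((e₁' - s * e₁') * (2 * e₁' + s * e₁')) := by
    rw [hz4]; field_simp
  -- the two compositions are the identity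
  have hid : ∀ (a b : ℂ), a ≠ 0 → b ≠ 0 → b * a = 1 →
      ∀ f : ℤ →₀ 𝔤, Tsc 𝔤 a (Tsc 𝔤 b f) = f := by
    intro a b ha hb hab f
    induction f using Finsupp.induction with
    | zero => simp
    | single_add n x f _ _ ih =>
      rw [map_add, map_add, ih, Tsc_single, map_smul, Tsc_single, smul_smul,
        ← mul_zpow, hab, one_zpow, one_smul]
  have hinv : c⁻¹ * c = 1 := inv_mul_cancel₀ hc0
  have hinv' : c * c⁻¹ = 1 := mul_inv_cancel₀ hc0
  refine ⟨LinearEquiv.ofLinear (Tsc 𝔤 c) (Tsc 𝔤 c⁻¹)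
    (LinearMap.ext (hid c c⁻¹ hc0 (inv_ne_zero hc0) hinv))
    (LinearMap.ext (hid c⁻¹ c (inv_ne_zero hc0) hc0 hinv')), ?_⟩
  have hss : ∀ (n m : ℤ) (x y : 𝔤),
      Tsc 𝔤 c (Gbr 𝔤 e₁ (s * e₁) (Finsupp.single n x) (Finsupp.single m y))
      = Gbr 𝔤 e₁' (s * e₁') (Tsc 𝔤 c (Finsupp.single n x))
          (Tsc 𝔤 c (Finsupp.single m y)) := by
    intro n m x y
    rw [Gbr_single_single, Tsc_key hc0 h2 h4, Tsc_single, Tsc_single,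
      Finsupp.smul_single, Finsupp.smul_single, Gbr_single_single,
      smul_lie, lie_smul, Fc_smul, Fc_smul, smul_smul]
  have hsg : ∀ (n : ℤ) (x : 𝔤) (g : ℤ →₀ 𝔤),
      Tsc 𝔤 c (Gbr 𝔤 e₁ (s * e₁) (Finsupp.single n x) g)
      = Gbr 𝔤 e₁' (s * e₁') (Tsc 𝔤 c (Finsupp.single n x)) (Tsc 𝔤 c g) := by
    intro n x g
    induction g using Finsupp.induction with
    | zero => simp [Gbr_zero_right]
    | single_add m y g _ _ ihg =>
      rw [Gbr_add_right, map_add, map_add, Gbr_add_right, ihg, hss]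
  intro f g
  simp only [LinearEquiv.ofLinear_apply]
  induction f using Finsupp.induction with
  | zero => simp [Gbr_zero_left]
  | single_add n x f _ _ ihf =>
    rw [Gbr_add_left, map_add, map_add, Gbr_add_left, ihf, hsg]
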